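/- Let V, W be finite-dimensional real inner product spaces and α : V × V → W a symmetric bilinear map with dim W = 2. Suppose there exist nonzero vectors v₁, v₂ ∈ V with α(v₁,v₂) = 0, ⟨α(v₁,v₁),α(v₂,v₂)⟩ = 0, and suppose moreover that ⟨α(Y,Z),α(X,v_j)⟩ = ⟨α(Y,v_j),α(X,Z)⟩ for all X,Y,Z ∈ V and j = 1,2, that the vectors η₁ = α(X,v₁) and η₂ = α(X,v₂) are orthonormal for some fixed X, and that ⟨α(Z,v₂),α(Y,v₁)⟩ = 0 for all Y,Z ∈ V. Then the curvature-like expression C(Y₁,Y₂,Y₃,Y₄) = ⟨α(Y₁,Y₄),α(Y₂,Y₃)⟩ − ⟨α(Y₁,Y₃),α(Y₂,Y₄)⟩ vanishes identically on V. -/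

import Mathlib

open scoped RealInnerProductSpace

/-- Concluding algebraic step of Case 2 of Proposition 5.1: with nonzero
vectors `v₁, v₂` satisfying `α(v₁,v₂) = 0`, `⟨α(v₁,v₁),α(v₂,v₂)⟩ = 0`, the
Gauss-type symmetry `⟨α(Y,Z),α(X,v_j)⟩ = ⟨α(Y,v_j),α(X,Z)⟩`, orthonormality of
`η₁ = α(X,v₁)`, `η₂ = α(X,v₂)` for a fixed `X`, and
`⟨α(Z,v₂),α(Y,v₁)⟩ = 0` for all `Y, Z`, the curvature-like expression
`C(Y₁,Y₂,Y₃,Y₄) = ⟨α(Y₁,Y₄),α(Y₂,Y₃)⟩ − ⟨α(Y₁,Y₃),α(Y₂,Y₄)⟩` vanishes. -/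
theorem stmt_10 {V W : Type*}
    [NormedAddCommGroup V] [InnerProductSpace ℝ V] [FiniteDimensional ℝ V]
    [NormedAddCommGroup W] [InnerProductSpace ℝ W] [FiniteDimensional ℝ W]
    (hW2 : Module.finrank ℝ W = 2)
    (α : V →ₗ[ℝ] V →ₗ[ℝ] W)
    (hαsymm : ∀ u v : V, α u v = α v u)
    (v₁ v₂ : V) (hv₁ : v₁ ≠ 0) (hv₂ : v₂ ≠ 0)
    (h0 : α v₁ v₂ = 0) (hperp : ⟪α v₁ v₁, α v₂ v₂⟫ = 0)
    (X : V)
    (hsym : ∀ Y Z X' : V,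
      ⟪α Y Z, α X' v₁⟫ = ⟪α Y v₁, α X' Z⟫ ∧
      ⟪α Y Z, α X' v₂⟫ = ⟪α Y v₂, α X' Z⟫)
    (hη₁ : ‖α X v₁‖ = 1) (hη₂ : ‖α X v₂‖ = 1)
    (horth : ∀ Y Z : V, ⟪α Z v₂, α Y v₁⟫ = 0) :
    ∀ Y₁ Y₂ Y₃ Y₄ : V,
      ⟪α Y₁ Y₄, α Y₂ Y₃⟫ - ⟪α Y₁ Y₃, α Y₂ Y₄⟫ = 0 := by
  classical
  set η₁ := α X v₁ with hη₁def
  set η₂ := α X v₂ with hη₂def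
  -- η₁ ⊥ η₂
  have h12 : ⟪η₁, η₂⟫ = 0 := by
    rw [real_inner_comm]; exact horth X X
  have hon : Orthonormal ℝ (![η₁, η₂]) := by
    rw [orthonormal_iff_ite]
    intro i j
    fin_cases i <;> fin_cases j <;>
      simp [h12, real_inner_comm η₂ η₁ ▸ h12,
        real_inner_self_eq_norm_sq, hη₁, hη₂]
  have hcard : Fintype.card (Fin 2) = Module.finrank ℝ W := by simp [hW2]
  let b0 : Module.Basis (Fin 2) ℝ W :=
    basisOfLinearIndependentOfCardEqFinrank hon.linearIndependent hcard
  have hb0 : ⇑b0 = ![η₁, η₂] :=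
    coe_basisOfLinearIndependentOfCardEqFinrank _ _
  let b : OrthonormalBasis (Fin 2) ℝ W :=
    b0.toOrthonormalBasis (by rw [hb0]; exact hon)
  have hb : ⇑b = ![η₁, η₂] := by
    rw [Module.Basis.coe_toOrthonormalBasis]; exact hb0
  have hinner : ∀ a c : W, ⟪a, c⟫ = ⟪a, η₁⟫ * ⟪η₁, c⟫ + ⟪a, η₂⟫ * ⟪η₂, c⟫ := by
    intro a c
    have := b.sum_inner_mul_inner a c
    rw [Fin.sum_univ_two, hb] at this
    simpa using this.symm
  -- orthogonality facts
  have hc2 : ∀ Y : V, ⟪α Y v₁, η₂⟫ = 0 := by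
    intro Y; rw [real_inner_comm]; exact horth Y X
  have hd1 : ∀ Y : V, ⟪α Y v₂, η₁⟫ = 0 := by
    intro Y; exact horth X Y
  -- rank-one decompositions
  have f1 : ∀ Y Z : V, ⟪α Y Z, η₁⟫ = ⟪α Y v₁, η₁⟫ * ⟪η₁, α X Z⟫ := by
    intro Y Z
    have h := (hsym Y Z X).1
    rw [h, hinner (α Y v₁) (α X Z), hc2 Y]
    ring
  have f2 : ∀ Y Z : V, ⟪α Y Z, η₂⟫ = ⟪α Y v₂, η₂⟫ * ⟪η₂, α X Z⟫ := by
    intro Y Z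
    have h := (hsym Y Z X).2
    rw [h, hinner (α Y v₂) (α X Z), hd1 Y]
    ring
  intro Y₁ Y₂ Y₃ Y₄
  rw [hinner (α Y₁ Y₄) (α Y₂ Y₃), hinner (α Y₁ Y₃) (α Y₂ Y₄)]
  rw [real_inner_comm (α Y₂ Y₃) η₁, real_inner_comm (α Y₂ Y₃) η₂,
      real_inner_comm (α Y₂ Y₄) η₁, real_inner_comm (α Y₂ Y₄) η₂]
  rw [f1 Y₁ Y₄, f1 Y₂ Y₃, f1 Y₁ Y₃, f1 Y₂ Y₄,
      f2 Y₁ Y₄, f2 Y₂ Y₃, f2 Y₁ Y₃, f2 Y₂ Y₄]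
  ring
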